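/- Let 𝓛 be a subspace lattice on a complex separable Hilbert space H, let T be a bounded operator on H and let M ∈ 𝓛. Then φ_T(Ψ_T(M)) = φ_T(M) and Ψ_T(Ψ_T(M)) = Ψ_T(M); that is, ω_T(Ψ_T(M)) = ω_T(M). (In projection terms: ω_T(ψ_T(P)^⊥) = ω_T(P).) -/

import Mathlib

open scoped InnerProductSpace

variable {H : Type*} [NormedAddCommGroup H] [InnerProductSpace ℂ H]
  [CompleteSpace H] [TopologicalSpace.SeparableSpace H]

/-- A subspace lattice on `H`: a set of closed subspaces containing `⊥` and `⊤`,
closed under arbitrary intersections and closed linear spans. -/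
def IsSubspaceLattice (𝓛 : Set (Submodule ℂ H)) : Prop :=
  (∀ M ∈ 𝓛, IsClosed (M : Set H)) ∧ ⊥ ∈ 𝓛 ∧ ⊤ ∈ 𝓛 ∧
  (∀ S ⊆ 𝓛, sInf S ∈ 𝓛) ∧ (∀ S ⊆ 𝓛, (sSup S).topologicalClosure ∈ 𝓛)

/-- A nest: a totally ordered subspace lattice. -/
def IsNest (𝓛 : Set (Submodule ℂ H)) : Prop :=
  IsSubspaceLattice 𝓛 ∧ ∀ M ∈ 𝓛, ∀ N ∈ 𝓛, M ≤ N ∨ N ≤ M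

/-- A continuous nest. -/
def IsContinuousNest (𝓛 : Set (Submodule ℂ H)) : Prop :=
  IsNest 𝓛 ∧ ∀ M ∈ 𝓛, M = (sSup {N ∈ 𝓛 | N < M}).topologicalClosure

/-- `M_x`: the intersection of all members of `𝓛` containing `x`. -/
noncomputable def Mx (𝓛 : Set (Submodule ℂ H)) (x : H) : Submodule ℂ H :=
  sInf {M ∈ 𝓛 | x ∈ M}

/-- `M̂_x`: the closed span of all members of `𝓛` orthogonal to `x`. -/
noncomputable def Mhat (𝓛 : Set (Submodule ℂ H)) (x : H) : Submodule ℂ H :=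
  (sSup {M ∈ 𝓛 | ∀ v ∈ M, inner ℂ x v = (0 : ℂ)}).topologicalClosure

/-- `φ_T(M)`: the closed span of all members `M'` of `𝓛` with `T(M') ⊆ M`. -/
noncomputable def phiT (𝓛 : Set (Submodule ℂ H)) (T : H →L[ℂ] H) (M : Submodule ℂ H) :
    Submodule ℂ H :=
  (sSup {M' ∈ 𝓛 | ∀ v ∈ M', T v ∈ M}).topologicalClosure

/-- `Ψ_T(M)`: the intersection of all `M' ∈ 𝓛` with `φ_T(M') = φ_T(M)`. -/
noncomputable def PsiT (𝓛 : Set (Submodule ℂ H)) (T : H →L[ℂ] H) (M : Submodule ℂ H) :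
    Submodule ℂ H :=
  sInf {M' ∈ 𝓛 | phiT 𝓛 T M' = phiT 𝓛 T M}

/-- `σ_T(M)`: the closed span of all `M' ∈ 𝓛` with `φ_T(M') = φ_T(M)`. -/
noncomputable def sigmaT (𝓛 : Set (Submodule ℂ H)) (T : H →L[ℂ] H) (M : Submodule ℂ H) :
    Submodule ℂ H :=
  (sSup {M' ∈ 𝓛 | phiT 𝓛 T M' = phiT 𝓛 T M}).topologicalClosure

/-- The kernel map `ω_T`. -/
noncomputable def omegaT (𝓛 : Set (Submodule ℂ H)) (T : H →L[ℂ] H) (M : Submodule ℂ H) :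
    Submodule ℂ H × Submodule ℂ H :=
  (phiT 𝓛 T M, PsiT 𝓛 T M)

/-- The rank-one operator `x ⊗ y : z ↦ ⟨z, y⟩ x`. -/
noncomputable def rankOne (x y : H) : H →L[ℂ] H :=
  (innerSL ℂ y).smulRight x

/-- The nest algebra of a subspace lattice. -/
def nestAlg (𝓛 : Set (Submodule ℂ H)) : Set (H →L[ℂ] H) :=
  {T | ∀ M ∈ 𝓛, ∀ v ∈ M, T v ∈ M}

/-- Lie module over the nest algebra. -/
def IsLieModule (𝓛 : Set (Submodule ℂ H)) (𝓜 : Submodule ℂ (H →L[ℂ] H)) : Prop :=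
  ∀ A ∈ 𝓜, ∀ T ∈ nestAlg 𝓛, A.comp T - T.comp A ∈ 𝓜

/-- Orthogonal projection of a vector onto a closed subspace (junk value `0` if not closed). -/
noncomputable def projVec (N : Submodule ℂ H) (z : H) : H := by
  classical
  exact if h : IsClosed (N : Set H) then
    have : CompleteSpace N := h.completeSpace_coe
    (Submodule.orthogonalProjection N z : H)
  else 0

lemma phiT_mono (𝓛 : Set (Submodule ℂ H)) (T : H →L[ℂ] H) {M N : Submodule ℂ H}
    (h : M ≤ N) : phiT 𝓛 T M ≤ phiT 𝓛 T N := by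
  apply Submodule.topologicalClosure_mono
  apply sSup_le_sSup
  intro K hK
  exact ⟨hK.1, fun v hv => h (hK.2 v hv)⟩

lemma phiT_maps (𝓛 : Set (Submodule ℂ H)) (T : H →L[ℂ] H) {N : Submodule ℂ H}
    (hN : IsClosed (N : Set H)) : ∀ v ∈ phiT 𝓛 T N, T v ∈ N := by
  have h1 : sSup {M' ∈ 𝓛 | ∀ v ∈ M', T v ∈ N} ≤ N.comap (T : H →ₗ[ℂ] H) := by
    apply sSup_le
    intro K hK v hv
    exact hK.2 v hv
  have h2 : IsClosed ((N.comap (T : H →ₗ[ℂ] H) : Submodule ℂ H) : Set H) := by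
    have : ((N.comap (T : H →ₗ[ℂ] H) : Submodule ℂ H) : Set H) = T ⁻¹' (N : Set H) := rfl
    rw [this]
    exact hN.preimage T.continuous
  intro v hv
  exact Submodule.topologicalClosure_minimal _ h1 h2 hv

theorem stmt_6 (𝓛 : Set (Submodule ℂ H)) (h𝓛 : IsSubspaceLattice 𝓛)
    (T : H →L[ℂ] H) (M : Submodule ℂ H) (hM : M ∈ 𝓛) :
    phiT 𝓛 T (PsiT 𝓛 T M) = phiT 𝓛 T M ∧
    PsiT 𝓛 T (PsiT 𝓛 T M) = PsiT 𝓛 T M := by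
  have hPsi_le : PsiT 𝓛 T M ≤ M := sInf_le ⟨hM, rfl⟩
  have hle1 : phiT 𝓛 T (PsiT 𝓛 T M) ≤ phiT 𝓛 T M := phiT_mono 𝓛 T hPsi_le
  have hle2 : phiT 𝓛 T M ≤ phiT 𝓛 T (PsiT 𝓛 T M) := by
    refine Submodule.topologicalClosure_minimal _ ?_ ?_
    · apply sSup_le
      intro K hK
      have hKsub : K ≤ phiT 𝓛 T M :=
        le_trans (le_sSup hK) (Submodule.le_topologicalClosure _)
      have hKPsi : ∀ v ∈ K, T v ∈ PsiT 𝓛 T M := by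
        intro v hv
        rw [PsiT, Submodule.mem_sInf]
        intro N hN
        have hvN : v ∈ phiT 𝓛 T N := by
          rw [hN.2]; exact hKsub hv
        exact phiT_maps 𝓛 T (h𝓛.1 N hN.1) v hvN
      have hKmem : K ∈ {M' ∈ 𝓛 | ∀ v ∈ M', T v ∈ PsiT 𝓛 T M} := ⟨hK.1, hKPsi⟩
      exact le_trans (le_sSup hKmem) (Submodule.le_topologicalClosure _)
    · exact Submodule.isClosed_topologicalClosure _
  have hphi : phiT 𝓛 T (PsiT 𝓛 T M) = phiT 𝓛 T M := le_antisymm hle1 hle2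
  refine ⟨hphi, ?_⟩
  rw [show PsiT 𝓛 T (PsiT 𝓛 T M) =
      sInf {M' ∈ 𝓛 | phiT 𝓛 T M' = phiT 𝓛 T (PsiT 𝓛 T M)} from rfl, hphi]
  rfl
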